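/- Let M1, M2 be monoids over disjoint alphabets with combings R1, R2 satisfying R_i* = R_i, and let M = M1 ∗ M2 be the monoid free product with R = (R1 ∪ R2)*. For every word w ∈ R there exists a reduced word w' ∈ R such that w rewrites to w' under the rewriting system T = { (z, ε) : z ∈ R1 ∪ R2, z represents the identity of M1 or M2 }, and w = w' in M. -/

import Mathlib

open Computability

variable {A1 A2 : Type*}

/-- One-step rewriting relation of a rewriting system. -/
def RStep {A : Type*} (R : Set (List A × List A)) (x y : List A) : Prop :=
  ∃ p ∈ R, ∃ l r : List A, x = l ++ p.1 ++ r ∧ y = l ++ p.2 ++ r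

/-- Word equality in the presented monoid: the congruence generated by `R`. -/
def RCong {A : Type*} (R : Set (List A × List A)) : List A → List A → Prop :=
  Relation.EqvGen (RStep R)

/-- A language over `A1` viewed over the disjoint union alphabet `A1 ⊕ A2`. -/
def lang1 (L : Language A1) : Language (A1 ⊕ A2) :=
  {w | ∃ x ∈ L, w = x.map Sum.inl}

/-- A language over `A2` viewed over the disjoint union alphabet `A1 ⊕ A2`. -/
def lang2 (L : Language A2) : Language (A1 ⊕ A2) :=
  {w | ∃ x ∈ L, w = x.map Sum.inr}

/-- Relations over `A1` lifted to the disjoint union alphabet. -/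
def liftL (R : Set (List A1 × List A1)) :
    Set (List (A1 ⊕ A2) × List (A1 ⊕ A2)) :=
  {p | ∃ q ∈ R, p.1 = q.1.map Sum.inl ∧ p.2 = q.2.map Sum.inl}

/-- Relations over `A2` lifted to the disjoint union alphabet. -/
def liftR (R : Set (List A2 × List A2)) :
    Set (List (A1 ⊕ A2) × List (A1 ⊕ A2)) :=
  {p | ∃ q ∈ R, p.1 = q.1.map Sum.inr ∧ p.2 = q.2.map Sum.inr}

/-- The rewriting system `T = {(z, ε) : z ∈ R1 ∪ R2, z = 1 in M1 or M2}`. -/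
def idSys (rel1 : Set (List A1 × List A1)) (rel2 : Set (List A2 × List A2))
    (R1 : Language A1) (R2 : Language A2) :
    Set (List (A1 ⊕ A2) × List (A1 ⊕ A2)) :=
  {p | p.2 = [] ∧ ((∃ z ∈ R1, p.1 = z.map Sum.inl ∧ RCong rel1 z []) ∨
    (∃ z ∈ R2, p.1 = z.map Sum.inr ∧ RCong rel2 z []))}

/-- `w'` is a reduced alternating word: it has an alternating factorization into
nonempty pieces from `R1 ∪ R2`, each representing a nonidentity element of its
factor monoid. -/
def IsReducedAlt (rel1 : Set (List A1 × List A1)) (rel2 : Set (List A2 × List A2))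
    (R1 : Language A1) (R2 : Language A2) (w' : List (A1 ⊕ A2)) : Prop :=
  ∃ ps : List (List (A1 ⊕ A2)), ps.flatten = w' ∧
    (∀ p ∈ ps, p ≠ [] ∧
      ((∃ x ∈ R1, p = x.map Sum.inl ∧ ¬ RCong rel1 x []) ∨
       (∃ x ∈ R2, p = x.map Sum.inr ∧ ¬ RCong rel2 x []))) ∧
    ps.Chain' (fun p q => (p ∈ lang1 R1 ∧ q ∈ lang2 R2) ∨
      (p ∈ (lang2 R2 : Language (A1 ⊕ A2)) ∧ q ∈ lang1 R1))

section Aux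

theorem RStep.context {A : Type*} {R : Set (List A × List A)} {a b : List A} (l r : List A)
    (h : RStep R a b) : RStep R (l ++ a ++ r) (l ++ b ++ r) := by
  obtain ⟨p, hp, l', r', rfl, rfl⟩ := h
  exact ⟨p, hp, l ++ l', r' ++ r, by simp, by simp⟩

theorem RCong.context {A : Type*} {R : Set (List A × List A)} {a b : List A} (l r : List A)
    (h : RCong R a b) : RCong R (l ++ a ++ r) (l ++ b ++ r) := by
  induction h with
  | rel x y h => exact Relation.EqvGen.rel _ _ (h.context l r)
  | refl x => exact Relation.EqvGen.refl _
  | symm x y _ ih => exact Relation.EqvGen.symm _ _ ih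
  | trans x y z _ _ ih1 ih2 => exact Relation.EqvGen.trans _ _ _ ih1 ih2

theorem RCong.mono {A : Type*} {R S : Set (List A × List A)} (hRS : R ⊆ S) {a b : List A}
    (h : RCong R a b) : RCong S a b := by
  refine Relation.EqvGen.mono (fun x y hxy => ?_) _ _ h
  obtain ⟨p, hp, l, r, rfl, rfl⟩ := hxy
  exact ⟨p, hRS hp, l, r, rfl, rfl⟩

theorem RCong.liftL_map {rel1 : Set (List A1 × List A1)} {a b : List A1}
    (h : RCong rel1 a b) :
    RCong (liftL rel1 : Set (List (A1 ⊕ A2) × List (A1 ⊕ A2)))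
      (a.map Sum.inl) (b.map Sum.inl) := by
  induction h with
  | rel x y h =>
    obtain ⟨p, hp, l, r, rfl, rfl⟩ := h
    exact Relation.EqvGen.rel _ _
      ⟨(p.1.map Sum.inl, p.2.map Sum.inl), ⟨p, hp, rfl, rfl⟩,
        l.map Sum.inl, r.map Sum.inl, by simp, by simp⟩
  | refl x => exact Relation.EqvGen.refl _
  | symm x y _ ih => exact Relation.EqvGen.symm _ _ ih
  | trans x y z _ _ ih1 ih2 => exact Relation.EqvGen.trans _ _ _ ih1 ih2

theorem RCong.liftR_map {rel2 : Set (List A2 × List A2)} {a b : List A2}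
    (h : RCong rel2 a b) :
    RCong (liftR rel2 : Set (List (A1 ⊕ A2) × List (A1 ⊕ A2)))
      (a.map Sum.inr) (b.map Sum.inr) := by
  induction h with
  | rel x y h =>
    obtain ⟨p, hp, l, r, rfl, rfl⟩ := h
    exact Relation.EqvGen.rel _ _
      ⟨(p.1.map Sum.inr, p.2.map Sum.inr), ⟨p, hp, rfl, rfl⟩,
        l.map Sum.inr, r.map Sum.inr, by simp, by simp⟩
  | refl x => exact Relation.EqvGen.refl _
  | symm x y _ ih => exact Relation.EqvGen.symm _ _ ih
  | trans x y z _ _ ih1 ih2 => exact Relation.EqvGen.trans _ _ _ ih1 ih2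

/-- A nonempty word cannot be both in `lang1` and `lang2`. -/
theorem not_both {R1 : Language A1} {R2 : Language A2} {x : List (A1 ⊕ A2)}
    (hne : x ≠ []) (h1 : x ∈ lang1 R1) (h2 : x ∈ (lang2 R2 : Language (A1 ⊕ A2))) :
    False := by
  obtain ⟨a, _, rfl⟩ := h1
  obtain ⟨b, _, hb⟩ := h2
  cases a with
  | nil => exact hne rfl
  | cons hd tl =>
    cases b with
    | nil => simp at hb
    | cons hd' tl' => simp at hb

/-- Concatenation closure of a language with `L∗ = L`. -/
theorem cat_mem {A : Type*} {L : Language A} (hL : L∗ = L) {x y : List A}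
    (hx : x ∈ L) (hy : y ∈ L) : x ++ y ∈ L := by
  rw [← hL]
  have : ([x, y] : List (List A)).flatten ∈ L∗ :=
    Language.join_mem_kstar (by intro z hz; simp at hz; rcases hz with rfl | rfl <;> assumption)
  simpa using this

/-- Normalization: any factorization into pieces of `lang1 R1 ∪ lang2 R2` can be
replaced by an alternating factorization into nonempty pieces with the same flatten. -/
theorem norm_lemma (R1 : Language A1) (R2 : Language A2)
    (hs1 : R1∗ = R1) (hs2 : R2∗ = R2) :
    ∀ ps : List (List (A1 ⊕ A2)),
      (∀ p ∈ ps, p ∈ lang1 R1 ∨ p ∈ (lang2 R2 : Language (A1 ⊕ A2))) →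
      ∃ qs : List (List (A1 ⊕ A2)), qs.flatten = ps.flatten ∧
        (∀ q ∈ qs, q ≠ [] ∧ (q ∈ lang1 R1 ∨ q ∈ (lang2 R2 : Language (A1 ⊕ A2)))) ∧
        qs.Chain' (fun p q => (p ∈ lang1 R1 ∧ q ∈ lang2 R2) ∨
          (p ∈ (lang2 R2 : Language (A1 ⊕ A2)) ∧ q ∈ lang1 R1)) := by
  have cat1 : ∀ {x y : List (A1 ⊕ A2)}, x ∈ lang1 R1 → y ∈ lang1 R1 →
      x ++ y ∈ lang1 R1 := by
    rintro x y ⟨a, ha, rfl⟩ ⟨b, hb, rfl⟩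
    exact ⟨a ++ b, cat_mem hs1 ha hb, by simp⟩
  have cat2 : ∀ {x y : List (A1 ⊕ A2)}, x ∈ (lang2 R2 : Language (A1 ⊕ A2)) →
      y ∈ (lang2 R2 : Language (A1 ⊕ A2)) → x ++ y ∈ (lang2 R2 : Language (A1 ⊕ A2)) := by
    rintro x y ⟨a, ha, rfl⟩ ⟨b, hb, rfl⟩
    exact ⟨a ++ b, cat_mem hs2 ha hb, by simp⟩
  intro ps
  induction ps with
  | nil => exact fun _ => ⟨[], rfl, by simp, List.isChain_nil⟩
  | cons p ps ih =>
    intro hmem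
    obtain ⟨qs, hflat, hqs, hchain⟩ := ih (fun q hq => hmem q (List.mem_cons_of_mem _ hq))
    have hp := hmem p List.mem_cons_self
    by_cases hpe : p = []
    · subst hpe; exact ⟨qs, by simpa using hflat, hqs, hchain⟩
    cases qs with
    | nil =>
      refine ⟨[p], ?_, ?_, List.isChain_singleton _⟩
      · have h : ps.flatten = [] := by simpa using hflat.symm
        simp [h]
      · intro q hq; simp at hq; subst hq; exact ⟨hpe, hp⟩
    | cons q rest =>
      have hq := hqs q List.mem_cons_self
      -- helper for the merged case
      have merge : ∀ (h : p ++ q ∈ lang1 R1 ∨ p ++ q ∈ (lang2 R2 : Language (A1 ⊕ A2))),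
          (∀ r, (q ∈ lang1 R1 ∧ r ∈ lang2 R2) ∨
              (q ∈ (lang2 R2 : Language (A1 ⊕ A2)) ∧ r ∈ lang1 R1) →
            (p ++ q ∈ lang1 R1 ∧ r ∈ lang2 R2) ∨
              (p ++ q ∈ (lang2 R2 : Language (A1 ⊕ A2)) ∧ r ∈ lang1 R1)) →
          ∃ qs' : List (List (A1 ⊕ A2)), qs'.flatten = (p :: ps).flatten ∧
            (∀ x ∈ qs', x ≠ [] ∧ (x ∈ lang1 R1 ∨ x ∈ (lang2 R2 : Language (A1 ⊕ A2)))) ∧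
            qs'.Chain' (fun a b => (a ∈ lang1 R1 ∧ b ∈ lang2 R2) ∨
              (a ∈ (lang2 R2 : Language (A1 ⊕ A2)) ∧ b ∈ lang1 R1)) := by
        intro hpq hstep
        refine ⟨(p ++ q) :: rest, ?_, ?_, ?_⟩
        · simp only [List.flatten_cons] at hflat ⊢
          simp [← hflat, List.append_assoc]
        · intro x hx
          rcases List.mem_cons.mp hx with rfl | hx
          · exact ⟨by simp [hpe], hpq⟩
          · exact hqs x (List.mem_cons_of_mem _ hx)
        · cases rest with
          | nil => exact List.isChain_singleton _
          | cons r rest' =>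
            obtain ⟨hqr, hchain'⟩ := List.isChain_cons_cons.mp hchain
            exact List.isChain_cons_cons.mpr ⟨hstep r hqr, hchain'⟩
      rcases hp with hp1 | hp2
      · rcases hq.2 with hq1 | hq2
        · -- both lang1 : merge
          refine merge (Or.inl (cat1 hp1 hq1)) ?_
          rintro r (⟨_, hr⟩ | ⟨hq2', _⟩)
          · exact Or.inl ⟨cat1 hp1 hq1, hr⟩
          · exact absurd hq2' (fun h => not_both hq.1 hq1 h)
        · -- p lang1, q lang2 : just prepend
          refine ⟨p :: q :: rest, ?_, ?_, List.isChain_cons_cons.mpr ⟨Or.inl ⟨hp1, hq2⟩, hchain⟩⟩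
          · simp only [List.flatten_cons] at hflat ⊢; simp [hflat]
          · intro x hx
            rcases List.mem_cons.mp hx with rfl | hx
            · exact ⟨hpe, Or.inl hp1⟩
            · exact hqs x hx
      · rcases hq.2 with hq1 | hq2
        · -- p lang2, q lang1 : prepend
          refine ⟨p :: q :: rest, ?_, ?_, List.isChain_cons_cons.mpr ⟨Or.inr ⟨hp2, hq1⟩, hchain⟩⟩
          · simp only [List.flatten_cons] at hflat ⊢; simp [hflat]
          · intro x hx
            rcases List.mem_cons.mp hx with rfl | hx
            · exact ⟨hpe, Or.inr hp2⟩
            · exact hqs x hx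
        · -- both lang2 : merge
          refine merge (Or.inr (cat2 hp2 hq2)) ?_
          rintro r (⟨hq1', _⟩ | ⟨_, hr⟩)
          · exact absurd hq1' (fun h => not_both hq.1 h hq2)
          · exact Or.inr ⟨cat2 hp2 hq2, hr⟩

end Aux

/-- Let `M1 = Mon⟨A1 | rel1⟩`, `M2 = Mon⟨A2 | rel2⟩` be monoids over disjoint
alphabets with regular combings `R1, R2` satisfying `R_i* = R_i`, and let
`M = M1 ∗ M2` be the monoid free product with combing `R = (R1 ∪ R2)*`. For every
`w ∈ R` there is a *reduced* `w' ∈ R` with `w →*_T w'` (where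
`T = {(z, ε) : z ∈ R1 ∪ R2, z = 1 in its factor}`) and `w = w'` in `M`. -/
theorem exists_reduced_rewrite [Fintype A1] [Fintype A2]
    (rel1 : Set (List A1 × List A1)) (rel2 : Set (List A2 × List A2))
    (R1 : Language A1) (R2 : Language A2)
    (hreg1 : R1.IsRegular) (hreg2 : R2.IsRegular)
    (hcomb1 : ∀ w : List A1, ∃ r ∈ R1, RCong rel1 r w)
    (hcomb2 : ∀ w : List A2, ∃ r ∈ R2, RCong rel2 r w)
    (hs1 : R1∗ = R1) (hs2 : R2∗ = R2) :
    ∀ w ∈ ((lang1 R1 + lang2 R2 : Language (A1 ⊕ A2))∗ : Language (A1 ⊕ A2)),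
      ∃ w' ∈ ((lang1 R1 + lang2 R2 : Language (A1 ⊕ A2))∗ : Language (A1 ⊕ A2)),
        IsReducedAlt rel1 rel2 R1 R2 w' ∧
        Relation.ReflTransGen (RStep (idSys rel1 rel2 R1 R2)) w w' ∧
        RCong (liftL rel1 ∪ liftR rel2) w w' := by
  set L : Language (A1 ⊕ A2) := lang1 R1 + lang2 R2 with hL
  have memL : ∀ p : List (A1 ⊕ A2),
      (p ∈ lang1 R1 ∨ p ∈ (lang2 R2 : Language (A1 ⊕ A2))) ↔ p ∈ L := by
    intro p; rfl
  suffices key : ∀ n (w : List (A1 ⊕ A2)), w.length ≤ n → w ∈ (L∗ : Language (A1 ⊕ A2)) →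
      ∃ w' ∈ (L∗ : Language (A1 ⊕ A2)),
        IsReducedAlt rel1 rel2 R1 R2 w' ∧
        Relation.ReflTransGen (RStep (idSys rel1 rel2 R1 R2)) w w' ∧
        RCong (liftL rel1 ∪ liftR rel2) w w' by
    intro w hw
    exact key w.length w le_rfl hw
  intro n
  induction n with
  | zero =>
    intro w hlen _
    have hw0 : w = [] := List.eq_nil_of_length_eq_zero (Nat.le_zero.mp hlen)
    subst hw0
    exact ⟨[], Language.nil_mem_kstar _, ⟨[], rfl, by simp, List.isChain_nil⟩,
      Relation.ReflTransGen.refl, Relation.EqvGen.refl _⟩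
  | succ n ih =>
    intro w hlen hw
    obtain ⟨ps, rfl, hps⟩ := Language.mem_kstar.mp hw
    obtain ⟨qs, hflat, hqs, hchain⟩ := norm_lemma R1 R2 hs1 hs2 ps
      (fun p hp => (memL p).mpr (hps p hp))
    by_cases hid : ∃ q ∈ qs, (∃ z ∈ R1, q = z.map Sum.inl ∧ RCong rel1 z []) ∨
        (∃ z ∈ R2, q = z.map Sum.inr ∧ RCong rel2 z [])
    · -- delete one identity piece and use the induction hypothesis
      obtain ⟨q, hq, hqid⟩ := hid
      obtain ⟨l, r, rfl⟩ := List.append_of_mem hq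
      have hqne : q ≠ [] := (hqs q hq).1
      have hflat2 : (l ++ q :: r).flatten = l.flatten ++ q ++ r.flatten := by
        simp [List.flatten_append]
      set w1 : List (A1 ⊕ A2) := l.flatten ++ r.flatten with hw1
      have hw1mem : w1 ∈ (L∗ : Language (A1 ⊕ A2)) := by
        have : (l ++ r).flatten ∈ (L∗ : Language (A1 ⊕ A2)) :=
          Language.join_mem_kstar (by
            intro y hy
            rcases List.mem_append.mp hy with hy | hy
            · exact (memL y).mp (hqs y (by simp [hy])).2
            · exact (memL y).mp (hqs y (by simp [hy])).2)
        simpa [List.flatten_append] using this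
      have hstep : RStep (idSys rel1 rel2 R1 R2) ps.flatten w1 := by
        refine ⟨(q, []), ⟨rfl, hqid⟩, l.flatten, r.flatten, ?_, by simp [hw1]⟩
        rw [← hflat, hflat2]
      have hlen1 : w1.length ≤ n := by
        have h1 : ps.flatten.length = w1.length + q.length := by
          rw [← hflat, hflat2]; simp [hw1]; ring
        have h2 : 1 ≤ q.length := List.length_pos_iff.mpr hqne
        omega
      obtain ⟨w', hw'mem, hred, hrt, hcong⟩ := ih w1 hlen1 hw1mem
      refine ⟨w', hw'mem, hred, Relation.ReflTransGen.head hstep hrt, ?_⟩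
      have hcong1 : RCong (liftL rel1 ∪ liftR rel2) ps.flatten w1 := by
        rcases hqid with ⟨z, _, rfl, hz⟩ | ⟨z, _, rfl, hz⟩
        · have := (hz.liftL_map (A2 := A2)).mono
            (Set.subset_union_left (s := liftL rel1) (t := liftR rel2))
          have := this.context l.flatten r.flatten
          rw [← hflat, hflat2]
          simpa using this
        · have := (hz.liftR_map (A1 := A1)).mono
            (Set.subset_union_right (s := liftL rel1) (t := liftR rel2))
          have := this.context l.flatten r.flatten
          rw [← hflat, hflat2]
          simpa using this
      exact Relation.EqvGen.trans _ _ _ hcong1 hcong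
    · -- every piece is nonidentity: the word is already reduced
      push_neg at hid
      refine ⟨ps.flatten, hw, ⟨qs, hflat, ?_, hchain⟩,
        Relation.ReflTransGen.refl, Relation.EqvGen.refl _⟩
      intro q hq
      refine ⟨(hqs q hq).1, ?_⟩
      rcases (hqs q hq).2 with ⟨x, hx, rfl⟩ | ⟨x, hx, rfl⟩
      · refine Or.inl ⟨x, hx, rfl, fun hc => ?_⟩
        exact (hid _ hq).1 x hx rfl hc
      · refine Or.inr ⟨x, hx, rfl, fun hc => ?_⟩
        exact (hid _ hq).2 x hx rfl hc
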